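/- For any even positive integer m and any integer n ≥ m + 1, the subgroup of Z^n generated by all {1, −1, 0}-vectors of weight m whose coordinate sum is zero equals the set of all integer vectors in Z^n whose coordinate sum is zero. -/

import Mathlib

/-- The set of `{1,−1,0}`-vectors in `ℤⁿ` of weight `m` (i.e. with exactly `m`
nonzero entries) whose coordinate sum is zero. -/
def zeroSumVectors (n m : ℕ) : Set (Fin n → ℤ) :=
  {x | (∀ i, x i = 1 ∨ x i = -1 ∨ x i = 0) ∧
    (Finset.univ.filter fun i => x i ≠ 0).card = m ∧ (∑ i, x i) = 0}

lemma gen_mem {n m : ℕ} (A B : Finset (Fin n)) (hd : Disjoint A B)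
    (hAB : A.card = B.card) (hm : A.card + B.card = m) :
    (fun x => (if x ∈ A then (1:ℤ) else 0) - if x ∈ B then 1 else 0) ∈ zeroSumVectors n m := by
  refine ⟨?_, ?_, ?_⟩
  · intro i
    by_cases hA : i ∈ A <;> by_cases hB : i ∈ B <;> simp [hA, hB]
  · have hset : (Finset.univ.filter fun i =>
        ((fun x => (if x ∈ A then (1:ℤ) else 0) - if x ∈ B then 1 else 0) i ≠ 0)) = A ∪ B := by
      ext x
      simp only [Finset.mem_filter, Finset.mem_univ, true_and, Finset.mem_union]
      by_cases hA : x ∈ A <;> by_cases hB : x ∈ B <;>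
        simp [hA, hB]
      exact (Finset.disjoint_left.mp hd hA hB).elim
    rw [hset, Finset.card_union_of_disjoint hd, hm]
  · simp only
    rw [Finset.sum_sub_distrib]
    simp [Finset.sum_ite_mem, hAB]

lemma single_diff_mem {n m : ℕ} (hm : Even m) (hm0 : 0 < m) (hn : m + 1 ≤ n)
    {i j : Fin n} (hij : i ≠ j) :
    Pi.single i (1:ℤ) - Pi.single j 1 ∈ AddSubgroup.closure (zeroSumVectors n m) := by
  obtain ⟨k, hk⟩ := hm
  have hk0 : 0 < k := by omega
  have hcard : m - 1 ≤ (Finset.univ \ {i, j} : Finset (Fin n)).card := by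
    have h2 : ({i, j} : Finset (Fin n)).card = 2 := by
      rw [Finset.card_insert_of_notMem (by simpa using hij), Finset.card_singleton]
    rw [Finset.card_sdiff_of_subset (Finset.subset_univ _), Finset.card_univ, Fintype.card_fin, h2]
    omega
  obtain ⟨T, hT, hTcard⟩ := Finset.exists_subset_card_eq (s := Finset.univ \ {i, j}) (n := m - 1) hcard
  obtain ⟨B, hB, hBcard⟩ := Finset.exists_subset_card_eq (s := T) (n := k) (by omega)
  have hiT : i ∉ T := fun h => by simpa using hT h
  have hjT : j ∉ T := fun h => by simpa using hT h
  set A' : Finset (Fin n) := T \ B with hA'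
  have hA'T : A' ⊆ T := Finset.sdiff_subset
  have hA'card : A'.card = k - 1 := by
    rw [hA', Finset.card_sdiff_of_subset hB, hTcard, hBcard]; omega
  have hiA' : i ∉ A' := fun h => hiT (hA'T h)
  have hjA' : j ∉ A' := fun h => hjT (hA'T h)
  have hiB : i ∉ B := fun h => hiT (hB h)
  have hjB : j ∉ B := fun h => hjT (hB h)
  have hA'B : Disjoint A' B := Finset.sdiff_disjoint
  have hd1 : Disjoint (insert i A') B :=
    Finset.disjoint_insert_left.mpr ⟨hiB, hA'B⟩
  have hd2 : Disjoint (insert j A') B :=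
    Finset.disjoint_insert_left.mpr ⟨hjB, hA'B⟩
  have hc1 : (insert i A').card = B.card := by
    rw [Finset.card_insert_of_notMem hiA', hA'card, hBcard]; omega
  have hc2 : (insert j A').card = B.card := by
    rw [Finset.card_insert_of_notMem hjA', hA'card, hBcard]; omega
  have hs1 : (insert i A').card + B.card = m := by
    rw [Finset.card_insert_of_notMem hiA', hA'card, hBcard]; omega
  have hs2 : (insert j A').card + B.card = m := by
    rw [Finset.card_insert_of_notMem hjA', hA'card, hBcard]; omega
  have h1 := AddSubgroup.subset_closure (gen_mem (insert i A') B hd1 hc1 hs1)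
  have h2 := AddSubgroup.subset_closure (gen_mem (insert j A') B hd2 hc2 hs2)
  have hmem := AddSubgroup.sub_mem _ h1 h2
  have heq : Pi.single i (1:ℤ) - Pi.single j 1 =
      (fun x => (if x ∈ insert i A' then (1:ℤ) else 0) - if x ∈ B then 1 else 0) -
      (fun x => (if x ∈ insert j A' then (1:ℤ) else 0) - if x ∈ B then 1 else 0) := by
    funext x
    simp only [Pi.sub_apply, Pi.single_apply]
    by_cases hxi : x = i
    · subst hxi
      simp [Finset.mem_insert, hiA', hij, Ne.symm hij]
    · by_cases hxj : x = j
      · subst hxj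
        simp only [Finset.mem_insert, hxi, hjA', or_self, if_false,
          Ne.symm hij, if_true, or_false, hiA']
        simp [Ne.symm hij]
        ring
      · by_cases hxA : x ∈ A' <;>
          simp [Finset.mem_insert, hxi, hxj, hxA]
  rw [heq]
  exact hmem

theorem stmt14 (n m : ℕ) (hm : Even m) (hm0 : 0 < m) (hn : m + 1 ≤ n) :
    (AddSubgroup.closure (zeroSumVectors n m) : Set (Fin n → ℤ)) =
      {x | (∑ i, x i) = 0} := by
  have hn0 : 0 < n := by omega
  ext x
  simp only [SetLike.mem_coe, Set.mem_setOf_eq]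
  constructor
  · intro hx
    let f : (Fin n → ℤ) →+ ℤ :=
      AddMonoidHom.mk' (fun x => ∑ i, x i) (by
        intro a b; simp [Finset.sum_add_distrib])
    have : AddSubgroup.closure (zeroSumVectors n m) ≤ f.ker :=
      (AddSubgroup.closure_le f.ker).mpr (fun y hy => hy.2.2)
    exact this hx
  · intro hx
    set j0 : Fin n := ⟨0, hn0⟩ with hj0
    have key : x = ∑ i, x i • (Pi.single i (1:ℤ) - Pi.single j0 1) := by
      funext t
      rw [Finset.sum_apply]
      symm
      simp only [Pi.smul_apply, Pi.sub_apply, smul_eq_mul, mul_sub]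
      rw [Finset.sum_sub_distrib]
      simp only [Pi.single_apply, mul_ite, mul_one, mul_zero]
      rw [Finset.sum_ite_eq Finset.univ t x]
      simp only [Finset.mem_univ, if_true]
      by_cases ht : t = j0
      · simp [ht, hx]
      · simp [ht]
    rw [key]
    refine AddSubgroup.sum_mem _ (fun i _ => ?_)
    by_cases h : i = j0
    · subst h
      simp only [sub_self, smul_zero]
      exact AddSubgroup.zero_mem _
    · exact AddSubgroup.zsmul_mem _ (single_diff_mem hm hm0 hn h) _
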